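/- For every d ≥ 1, κ > 0, z = (z_1, …, z_{d+1}) ∈ ℝ^{d+1}, and integer p ≥ 1, the following holds: for every pair of real polynomials (g_0, g_1) in the d variables x_2, …, x_d, t with total degree of g_0 at most p and total degree of g_1 at most p − 1, there exists a unique polynomial v ∈ QT^p(z) such that substituting x_1 := z_1 in v yields g_0 and substituting x_1 := z_1 in ∂v/∂x_1 yields g_1. Equivalently, the linear map v ↦ (v|_{x_1 = z_1}, (∂v/∂x_1)|_{x_1 = z_1}) restricted to QT^p(z) is a bijection onto the product of these two polynomial spaces. -/

import Mathlib

/-- Iterated partial derivative of a multivariate polynomial: the `α`-th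
partial derivative, for a multi-index `α`. -/
noncomputable def mpderiv {n : ℕ} (α : Fin n → ℕ) :
    MvPolynomial (Fin n) ℝ →ₗ[ℝ] MvPolynomial (Fin n) ℝ :=
  ((List.finRange n).map
    (fun i => ((MvPolynomial.pderiv i :
        Derivation ℝ (MvPolynomial (Fin n) ℝ) (MvPolynomial (Fin n) ℝ)).toLinearMap) ^ (α i))).prod

/-- The heat operator `H v = ∂_t v − κ Σ_{j=1}^d ∂²_{x_j} v` acting on real
polynomials in the `d+1` variables `x_1, …, x_d, t` (indexed by `Fin (d+1)`,
the time variable being the last index and `x_1` the index `0`). -/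
noncomputable def heatOp (d : ℕ) (κ : ℝ) (v : MvPolynomial (Fin (d + 1)) ℝ) :
    MvPolynomial (Fin (d + 1)) ℝ :=
  MvPolynomial.pderiv (Fin.last d) v -
    MvPolynomial.C κ * ∑ j : Fin d,
      MvPolynomial.pderiv j.castSucc (MvPolynomial.pderiv j.castSucc v)

/-- The polynomial quasi-Trefftz space `QT^p(z)`. -/
def QTset (d : ℕ) (κ : ℝ) (z : Fin (d + 1) → ℝ) (p : ℕ) :
    Set (MvPolynomial (Fin (d + 1)) ℝ) :=
  {v | v.totalDegree ≤ p ∧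
    ∀ α : Fin (d + 1) → ℕ, (∑ i, α i) + 2 ≤ p →
      MvPolynomial.eval z (mpderiv α (heatOp d κ v)) = 0}

/-- Substitution `x_1 := c` into a polynomial in the variables `x_1, …, x_d, t`,
yielding a polynomial in the remaining `d` variables `x_2, …, x_d, t`. -/
noncomputable def substX1 (d : ℕ) (c : ℝ) :
    MvPolynomial (Fin (d + 1)) ℝ →ₐ[ℝ] MvPolynomial (Fin d) ℝ :=
  MvPolynomial.aeval
    (Fin.cases (MvPolynomial.C c) (fun j : Fin d => MvPolynomial.X j))

open MvPolynomial Finsupp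

namespace QTAux

noncomputable section

variable {n : ℕ}

lemma coeff_pderiv (i : Fin n) (w : MvPolynomial (Fin n) ℝ) (γ : Fin n →₀ ℕ) :
    coeff γ (MvPolynomial.pderiv i w) = ((γ i : ℝ) + 1) * coeff (γ + single i 1) w := by
  induction w using MvPolynomial.induction_on' with
  | add p q hp hq => simp [map_add, coeff_add, hp, hq, mul_add]
  | monomial u a =>
    rw [pderiv_monomial, coeff_monomial, coeff_monomial]
    by_cases h : u = γ + single i 1
    · subst h
      have h1 : γ + single i 1 - single i 1 = γ := by
        ext j; simp [tsub_apply]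
      have h2 : (γ + single i 1 : Fin n →₀ ℕ) i = γ i + 1 := by simp
      rw [if_pos h1, h2]
      push_cast; simp; ring
    · rw [if_neg h]
      by_cases h2 : u - single i 1 = γ
      · rw [if_pos h2]
        have hui : u i = 0 := by
          by_contra hne
          apply h
          ext j
          have hj2 := DFunLike.congr_fun h2 j
          simp only [tsub_apply] at hj2
          by_cases hj : j = i
          · subst hj
            simp only [Finsupp.add_apply, Finsupp.single_eq_same] at *
            omega
          · simp only [Finsupp.add_apply, Finsupp.single_apply, if_neg (Ne.symm hj)] at *
            omega
        simp [hui]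
      · rw [if_neg h2, mul_zero]

lemma coeff_pderiv2 (i : Fin n) (w : MvPolynomial (Fin n) ℝ) (γ : Fin n →₀ ℕ) :
    coeff γ (MvPolynomial.pderiv i (MvPolynomial.pderiv i w)) =
      ((γ i : ℝ) + 1) * ((γ i : ℝ) + 2) * coeff (γ + single i 2) w := by
  rw [coeff_pderiv, coeff_pderiv]
  have h1 : (γ + single i 1 : Fin n →₀ ℕ) i = γ i + 1 := by simp
  have h2 : γ + single i 1 + single i 1 = γ + single i 2 := by
    rw [add_assoc, ← Finsupp.single_add]
  rw [h1, h2]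
  push_cast; ring

lemma coeff_heatOp (m : ℕ) (κ : ℝ) (w : MvPolynomial (Fin (m + 1)) ℝ) (γ : Fin (m + 1) →₀ ℕ) :
    coeff γ (heatOp m κ w) =
      ((γ (Fin.last m) : ℝ) + 1) * coeff (γ + single (Fin.last m) 1) w -
        κ * ∑ j : Fin m, ((γ j.castSucc : ℝ) + 1) * ((γ j.castSucc : ℝ) + 2) *
          coeff (γ + single j.castSucc 2) w := by
  rw [heatOp, coeff_sub, coeff_C_mul, coeff_sum, coeff_pderiv]
  congr 1
  congr 1
  exact Finset.sum_congr rfl fun j _ => coeff_pderiv2 _ _ _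

/- cons arithmetic -/
lemma cons_add_single_zero (b m : ℕ) (δ : Fin n →₀ ℕ) :
    Finsupp.cons b δ + single (0 : Fin (n + 1)) m = Finsupp.cons (b + m) δ := by
  ext j
  refine Fin.cases ?_ (fun i => ?_) j
  · simp
  · simp [Finsupp.single_apply, (Fin.succ_ne_zero i).symm]

lemma cons_add_single_succ (b m : ℕ) (i : Fin n) (δ : Fin n →₀ ℕ) :
    Finsupp.cons b δ + single i.succ m = Finsupp.cons b (δ + single i m) := by
  ext j
  refine Fin.cases ?_ (fun l => ?_) j
  · simp [Finsupp.single_apply, Fin.succ_ne_zero i]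
  · simp [Finsupp.single_apply, Fin.succ_inj]

lemma cons_sub_single_zero (b k : ℕ) (δ : Fin n →₀ ℕ) :
    Finsupp.cons b δ - single (0 : Fin (n + 1)) k = Finsupp.cons (b - k) δ := by
  ext j
  refine Fin.cases ?_ (fun i => ?_) j
  · simp [tsub_apply]
  · simp [tsub_apply, Finsupp.single_apply, (Fin.succ_ne_zero i).symm]

lemma cons_zero_eq_mapDomain (δ : Fin n →₀ ℕ) :
    Finsupp.cons 0 δ = Finsupp.mapDomain Fin.succ δ := by
  ext j
  refine Fin.cases ?_ (fun i => ?_) j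
  · rw [Finsupp.cons_zero, Finsupp.mapDomain_notin_range]
    simp [Fin.succ_ne_zero]
  · rw [Finsupp.cons_succ, Finsupp.mapDomain_apply (Fin.succ_injective n)]

lemma sum_cons (b : ℕ) (δ : Fin n →₀ ℕ) :
    ∑ i, (Finsupp.cons b δ) i = b + ∑ i, δ i := by
  rw [Fin.sum_univ_succ]
  simp

lemma coeff_emb (m : ℕ) (δ : Fin n →₀ ℕ) (g : MvPolynomial (Fin n) ℝ) :
    coeff (Finsupp.cons m δ) (rename Fin.succ g) = if m = 0 then coeff δ g else 0 := by
  split_ifs with h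
  · subst h
    rw [cons_zero_eq_mapDomain]
    exact coeff_rename_mapDomain _ (Fin.succ_injective n) _ _
  · apply coeff_rename_eq_zero
    intro u hu
    exfalso
    apply h
    have := DFunLike.congr_fun hu (0 : Fin (n + 1))
    rw [Finsupp.cons_zero] at this
    rw [← this, Finsupp.mapDomain_notin_range]
    simp [Fin.succ_ne_zero]

lemma coeff_xpow_emb (b k : ℕ) (δ : Fin n →₀ ℕ) (g : MvPolynomial (Fin n) ℝ) :
    coeff (Finsupp.cons b δ) (MvPolynomial.X (0 : Fin (n + 1)) ^ k * rename Fin.succ g) =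
      if b = k then coeff δ g else 0 := by
  rw [X_pow_eq_monomial, coeff_monomial_mul']
  by_cases hk : k ≤ b
  · have hle : single (0 : Fin (n + 1)) k ≤ Finsupp.cons b δ := by
      rw [Finsupp.single_le_iff, Finsupp.cons_zero]; exact hk
    rw [if_pos hle, cons_sub_single_zero, coeff_emb, one_mul]
    congr 1
    simp only [eq_iff_iff]
    omega
  · have hle : ¬ single (0 : Fin (n + 1)) k ≤ Finsupp.cons b δ := by
      rw [Finsupp.single_le_iff, Finsupp.cons_zero]; exact hk
    rw [if_neg hle, if_neg (by omega)]

/-- Truncation to total degree ≤ m. -/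
noncomputable def trunc (m : ℕ) (g : MvPolynomial (Fin n) ℝ) : MvPolynomial (Fin n) ℝ :=
  ∑ γ ∈ g.support.filter (fun γ => (∑ i, γ i) ≤ m), monomial γ (coeff γ g)

lemma coeff_trunc (m : ℕ) (g : MvPolynomial (Fin n) ℝ) (δ : Fin n →₀ ℕ) :
    coeff δ (trunc m g) = if (∑ i, δ i) ≤ m then coeff δ g else 0 := by
  rw [trunc, coeff_sum]
  simp_rw [coeff_monomial]
  rw [Finset.sum_ite_eq' (g.support.filter (fun γ => (∑ i, γ i) ≤ m)) δ (fun γ => coeff γ g)]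
  by_cases hs : coeff δ g = 0
  · simp [hs]
  · simp [Finset.mem_filter, MvPolynomial.mem_support_iff, hs]

/-- Key lemma: coefficient of the heat operator on a slice decomposition. -/
lemma coeff_heatOp_cons (e : ℕ) (κ : ℝ) (w : MvPolynomial (Fin (e + 2)) ℝ)
    (b : ℕ) (δ : Fin (e + 1) →₀ ℕ) (t : MvPolynomial (Fin (e + 1)) ℝ)
    (ht : ∀ δ' : Fin (e + 1) →₀ ℕ, coeff (Finsupp.cons b δ') w = coeff δ' t) :
    coeff (Finsupp.cons b δ) (heatOp (e + 1) κ w) =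
      coeff δ (heatOp e κ t) - κ * ((b : ℝ) + 1) * ((b : ℝ) + 2) *
        coeff (Finsupp.cons (b + 2) δ) w := by
  rw [coeff_heatOp, coeff_heatOp]
  have hlast : (Fin.last (e + 1)) = (Fin.last e).succ := (Fin.succ_last e).symm
  rw [hlast, Finsupp.cons_succ, cons_add_single_succ, ht]
  rw [Fin.sum_univ_succ]
  have h0 : (0 : Fin (e + 1)).castSucc = 0 := rfl
  rw [h0, Finsupp.cons_zero, cons_add_single_zero]
  have hsucc : ∀ j : Fin e, (j.succ).castSucc = (j.castSucc).succ := by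
    intro j; exact (Fin.succ_castSucc j).symm
  have : ∀ j : Fin e,
      ((Finsupp.cons b δ) ((j.succ).castSucc) : ℝ) = (δ (j.castSucc) : ℝ) := by
    intro j; rw [hsucc, Finsupp.cons_succ]
  rw [Finset.sum_congr rfl (fun j (_ : j ∈ Finset.univ) => by
    rw [hsucc, Finsupp.cons_succ, cons_add_single_succ, ht])]
  push_cast
  ring

lemma monomial_cons (b : ℕ) (δ : Fin n →₀ ℕ) (a : ℝ) :
    (monomial (Finsupp.cons b δ) a : MvPolynomial (Fin (n + 1)) ℝ) =
      MvPolynomial.X (0 : Fin (n + 1)) ^ b * rename Fin.succ (monomial δ a) := by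
  rw [rename_monomial, X_pow_eq_monomial, monomial_mul, one_mul]
  have hc : Finsupp.cons b δ = single (0 : Fin (n + 1)) b + Finsupp.mapDomain Fin.succ δ := by
    rw [← cons_zero_eq_mapDomain]
    ext j
    refine Fin.cases ?_ (fun i => ?_) j <;>
      simp [Finsupp.single_apply, (Fin.succ_ne_zero _).symm]
  rw [hc]

lemma substX1_emb (c : ℝ) (g : MvPolynomial (Fin n) ℝ) :
    substX1 n c (rename Fin.succ g) = g := by
  rw [substX1, aeval_rename]
  have : ((Fin.cases (MvPolynomial.C c) (fun j : Fin n => MvPolynomial.X j) : Fin (n+1) → _) ∘ Fin.succ) = MvPolynomial.X := by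
    funext j; simp
  rw [this]
  exact aeval_X_left_apply g

lemma substX1_X0 (c : ℝ) :
    substX1 n c (MvPolynomial.X (0 : Fin (n + 1))) = MvPolynomial.C c := by
  rw [substX1, aeval_X]
  rfl

lemma coeff_substX1_zero (w : MvPolynomial (Fin (n + 1)) ℝ) (δ : Fin n →₀ ℕ) :
    coeff δ (substX1 n 0 w) = coeff (Finsupp.cons 0 δ) w := by
  induction w using MvPolynomial.induction_on' with
  | add p q hp hq => simp [map_add, coeff_add, hp, hq]
  | monomial u a =>
    rw [← Finsupp.cons_tail u, monomial_cons, map_mul, map_pow, substX1_X0, substX1_emb,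
      coeff_xpow_emb]
    by_cases h : u 0 = 0
    · simp [h]
    · rw [if_neg (fun hh => h hh.symm), MvPolynomial.C_0, zero_pow h, zero_mul, coeff_zero]

lemma pderiv_pow_monomial (i : Fin n) (k : ℕ) (u : Fin n →₀ ℕ) (a : ℝ) :
    (((MvPolynomial.pderiv i :
        Derivation ℝ (MvPolynomial (Fin n) ℝ) (MvPolynomial (Fin n) ℝ)).toLinearMap) ^ k)
        (monomial u a) =
      monomial (u - single i k) (a * ((u i).descFactorial k : ℝ)) := by
  induction k generalizing u a with
  | zero => simp
  | succ k ih =>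
    rw [pow_succ, Module.End.mul_apply]
    have h1 : ((MvPolynomial.pderiv i :
        Derivation ℝ (MvPolynomial (Fin n) ℝ) (MvPolynomial (Fin n) ℝ)).toLinearMap)
        (monomial u a) = monomial (u - single i 1) (a * ((u i : ℕ) : ℝ)) := by
      simp [pderiv_monomial]
    rw [h1, ih]
    have hexp : u - single i 1 - single i k = u - single i (k + 1) := by
      rw [tsub_tsub, ← Finsupp.single_add, add_comm]
    have happ : (u - single i 1 : Fin n →₀ ℕ) i = u i - 1 := by
      simp [tsub_apply]
    rw [hexp, happ]
    congr 1
    cases hu : u i with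
    | zero => simp
    | succ m =>
      rw [Nat.succ_sub_one, Nat.succ_descFactorial_succ]
      push_cast
      ring

lemma single_sum_apply_zero (α : Fin n → ℕ) (i : Fin n) (t : List (Fin n)) (hi : i ∉ t) :
    ((t.map fun j => single j (α j)).sum : Fin n →₀ ℕ) i = 0 := by
  induction t with
  | nil => simp
  | cons j t ih =>
    simp only [List.map_cons, List.sum_cons, Finsupp.add_apply]
    rw [List.mem_cons, not_or] at hi
    rw [Finsupp.single_apply, if_neg (Ne.symm hi.1), ih hi.2, add_zero]

lemma mpderiv_list_monomial (α : Fin n → ℕ) (u : Fin n →₀ ℕ) (a : ℝ) (l : List (Fin n))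
    (hl : l.Nodup) :
    ((l.map fun i => ((MvPolynomial.pderiv i :
        Derivation ℝ (MvPolynomial (Fin n) ℝ) (MvPolynomial (Fin n) ℝ)).toLinearMap)
          ^ (α i)).prod) (monomial u a) =
      monomial (u - (l.map fun i => single i (α i)).sum)
        (a * ((l.map fun i => ((u i).descFactorial (α i) : ℝ)).prod)) := by
  induction l with
  | nil => simp
  | cons i t ih =>
    obtain ⟨hit, htd⟩ := List.nodup_cons.mp hl
    rw [List.map_cons, List.prod_cons, Module.End.mul_apply, ih htd, pderiv_pow_monomial]
    have happ : (u - (t.map fun j => single j (α j)).sum : Fin n →₀ ℕ) i = u i := by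
      rw [tsub_apply, single_sum_apply_zero α i t hit, Nat.sub_zero]
    rw [happ]
    have hexp : u - (t.map fun j => single j (α j)).sum - single i (α i) =
        u - ((i :: t).map fun j => single j (α j)).sum := by
      rw [tsub_tsub, List.map_cons, List.sum_cons, add_comm]
    rw [hexp]
    congr 1
    rw [List.map_cons, List.prod_cons]
    ring

lemma eval_zero_monomial (γ : Fin n →₀ ℕ) (c : ℝ) :
    MvPolynomial.eval (0 : Fin n → ℝ) (monomial γ c) = if γ = 0 then c else 0 := by
  rw [eval_monomial]
  by_cases h : γ = 0
  · simp [h]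
  · rw [if_neg h]
    obtain ⟨j, hj⟩ : ∃ j, γ j ≠ 0 := by
      by_contra hc
      push_neg at hc
      exact h (Finsupp.ext hc)
    have : (γ.prod fun i e => (0 : Fin n → ℝ) i ^ e) = 0 :=
      Finset.prod_eq_zero (Finsupp.mem_support_iff.mpr hj) (by simp [zero_pow hj])
    rw [this, mul_zero]

lemma eval_zero_mpderiv (α : Fin n → ℕ) (q : MvPolynomial (Fin n) ℝ) :
    MvPolynomial.eval (0 : Fin n → ℝ) (mpderiv α q) =
      (∏ i, ((α i).factorial : ℝ)) * coeff (equivFunOnFinite.symm α) q := by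
  induction q using MvPolynomial.induction_on' with
  | add p q hp hq => rw [map_add, map_add, coeff_add, hp, hq]; ring
  | monomial u a =>
    rw [mpderiv, mpderiv_list_monomial α u a _ (List.nodup_finRange n)]
    have hF : ((List.finRange n).map fun i => single i (α i)).sum =
        equivFunOnFinite.symm α := by
      rw [← Fin.sum_univ_def]
      ext j
      rw [Finsupp.finset_sum_apply]
      simp_rw [Finsupp.single_apply]
      rw [Finset.sum_ite_eq' Finset.univ j α, if_pos (Finset.mem_univ j)]
      rfl
    have hD : ((List.finRange n).map fun i => ((u i).descFactorial (α i) : ℝ)).prod =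
        ∏ i, ((u i).descFactorial (α i) : ℝ) := by
      rw [← Fin.prod_univ_def]
    rw [hF, hD, eval_zero_monomial, coeff_monomial]
    by_cases h : u = equivFunOnFinite.symm α
    · have hui : ∀ i, u i = α i := fun i => by
        rw [h]; rfl
      have h0 : u - equivFunOnFinite.symm α = 0 := by
        ext j
        rw [tsub_apply]
        have : (equivFunOnFinite.symm α : Fin n →₀ ℕ) j = α j := rfl
        rw [this, hui j, Nat.sub_self]
        rfl
      rw [if_pos h0, if_pos h]
      have : ∀ i, ((u i).descFactorial (α i) : ℝ) = ((α i).factorial : ℝ) := fun i => by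
        rw [hui i, Nat.descFactorial_self]
      rw [Finset.prod_congr rfl fun i _ => this i]
      ring
    · rw [if_neg h]
      by_cases h2 : u - equivFunOnFinite.symm α = 0
      · rw [if_pos h2]
        obtain ⟨j, hj⟩ : ∃ j, u j ≠ α j := by
          by_contra hc
          push_neg at hc
          exact h (Finsupp.ext fun j => hc j)
        have hle : u j ≤ α j := by
          have h2j := DFunLike.congr_fun h2 j
          rw [tsub_apply, Finsupp.coe_zero, Pi.zero_apply] at h2j
          have h2j' : u j - α j = 0 := h2j
          omega
        have hlt : u j < α j := lt_of_le_of_ne hle hj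
        have : (∏ i, ((u i).descFactorial (α i) : ℝ)) = 0 :=
          Finset.prod_eq_zero (Finset.mem_univ j)
            (by rw [Nat.descFactorial_eq_zero_iff_lt.mpr hlt]; norm_num)
        rw [this, mul_zero, mul_zero]
      · rw [if_neg h2, mul_zero]

/-- Translation by `z`. -/
noncomputable def shift (z : Fin n → ℝ) : MvPolynomial (Fin n) ℝ →ₐ[ℝ] MvPolynomial (Fin n) ℝ :=
  aeval (fun i => MvPolynomial.X i + MvPolynomial.C (z i))

lemma shift_X (z : Fin n → ℝ) (i : Fin n) :
    shift z (MvPolynomial.X i) = MvPolynomial.X i + MvPolynomial.C (z i) := aeval_X _ i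

lemma shift_C (z : Fin n → ℝ) (r : ℝ) : shift z (MvPolynomial.C r) = MvPolynomial.C r := by
  rw [shift, aeval_C, algebraMap_eq]

lemma shift_shift (z w : Fin n → ℝ) (q : MvPolynomial (Fin n) ℝ) :
    shift z (shift w q) = shift (z + w) q := by
  have h : (shift z).comp (shift w) = shift (z + w) := by
    apply algHom_ext
    intro i
    simp only [AlgHom.comp_apply, shift_X, map_add, shift_C, Pi.add_apply, MvPolynomial.C_add]
    ring
  exact DFunLike.congr_fun h q

lemma shift_zero (q : MvPolynomial (Fin n) ℝ) : shift (0 : Fin n → ℝ) q = q := by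
  have h : shift (0 : Fin n → ℝ) = AlgHom.id ℝ _ := by
    apply algHom_ext
    intro i
    simp [shift_X]
  rw [h]; rfl

lemma shift_left_inv (z : Fin n → ℝ) (q : MvPolynomial (Fin n) ℝ) :
    shift (-z) (shift z q) = q := by
  rw [shift_shift, neg_add_cancel, shift_zero]

lemma shift_right_inv (z : Fin n → ℝ) (q : MvPolynomial (Fin n) ℝ) :
    shift z (shift (-z) q) = q := by
  rw [shift_shift, add_neg_cancel, shift_zero]

lemma shift_injective (z : Fin n → ℝ) :
    Function.Injective (shift z : MvPolynomial (Fin n) ℝ →ₐ[ℝ] MvPolynomial (Fin n) ℝ) := by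
  intro a b h
  have := congrArg (shift (-z)) h
  rwa [shift_left_inv, shift_left_inv] at this

lemma shift_pderiv (z : Fin n → ℝ) (i : Fin n) (q : MvPolynomial (Fin n) ℝ) :
    MvPolynomial.pderiv i (shift z q) = shift z (MvPolynomial.pderiv i q) := by
  induction q using MvPolynomial.induction_on with
  | C a => rw [shift_C, pderiv_C, map_zero]
  | add p q hp hq =>
    simp only [map_add, hp, hq]
  | mul_X p j hp =>
    have hX : shift z (MvPolynomial.pderiv i (MvPolynomial.X j)) =
        MvPolynomial.pderiv i (MvPolynomial.X j) := by
      by_cases h : j = i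
      · subst h; rw [pderiv_X_self, map_one]
      · rw [pderiv_X_of_ne h, map_zero]
    have h1 : shift z (p * MvPolynomial.X j) =
        shift z p * (MvPolynomial.X j + MvPolynomial.C (z j)) := by
      rw [map_mul, shift_X]
    have h2 : MvPolynomial.pderiv i (p * MvPolynomial.X j) =
        MvPolynomial.pderiv i p * MvPolynomial.X j +
          p * MvPolynomial.pderiv i (MvPolynomial.X j) := pderiv_mul
    rw [h1, h2, pderiv_mul, map_add, map_add, map_mul, map_mul, hp, hX, pderiv_C, add_zero,
      shift_X]

lemma shift_pderiv_pow (z : Fin n → ℝ) (i : Fin n) (k : ℕ) (q : MvPolynomial (Fin n) ℝ) :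
    (((MvPolynomial.pderiv i :
        Derivation ℝ (MvPolynomial (Fin n) ℝ) (MvPolynomial (Fin n) ℝ)).toLinearMap) ^ k)
      (shift z q) =
    shift z ((((MvPolynomial.pderiv i :
        Derivation ℝ (MvPolynomial (Fin n) ℝ) (MvPolynomial (Fin n) ℝ)).toLinearMap) ^ k) q) := by
  induction k generalizing q with
  | zero => simp
  | succ k ih =>
    rw [pow_succ, Module.End.mul_apply, Module.End.mul_apply]
    have h1 : ((MvPolynomial.pderiv i :
        Derivation ℝ (MvPolynomial (Fin n) ℝ) (MvPolynomial (Fin n) ℝ)).toLinearMap)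
        (shift z q) = shift z (MvPolynomial.pderiv i q) := shift_pderiv z i q
    rw [h1, ih]
    rfl

lemma mpderiv_shift (z : Fin n → ℝ) (α : Fin n → ℕ) (q : MvPolynomial (Fin n) ℝ) :
    mpderiv α (shift z q) = shift z (mpderiv α q) := by
  rw [mpderiv]
  generalize List.finRange n = l
  induction l generalizing q with
  | nil => simp
  | cons i t ih =>
    rw [List.map_cons, List.prod_cons, Module.End.mul_apply, Module.End.mul_apply, ih,
      shift_pderiv_pow]

lemma heatOp_shift (m : ℕ) (κ : ℝ) (z : Fin (m + 1) → ℝ) (v : MvPolynomial (Fin (m + 1)) ℝ) :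
    heatOp m κ (shift z v) = shift z (heatOp m κ v) := by
  rw [heatOp, heatOp, map_sub, map_mul, shift_C, map_sum, shift_pderiv]
  congr 2
  exact Finset.sum_congr rfl fun j _ => by rw [shift_pderiv, shift_pderiv]

lemma eval_zero_shift (z : Fin n → ℝ) (q : MvPolynomial (Fin n) ℝ) :
    MvPolynomial.eval (0 : Fin n → ℝ) (shift z q) = MvPolynomial.eval z q := by
  induction q using MvPolynomial.induction_on with
  | C a => rw [shift_C]; simp
  | add p q hp hq => rw [map_add, map_add, hp, hq, map_add]
  | mul_X p j hp =>
    rw [map_mul, shift_X, map_mul, map_add, hp, map_mul]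
    simp [eval_X, eval_C]

lemma totalDegree_shift_le (z : Fin n → ℝ) (q : MvPolynomial (Fin n) ℝ) :
    (shift z q).totalDegree ≤ q.totalDegree := by
  conv_lhs => rw [q.as_sum]
  rw [map_sum]
  refine (MvPolynomial.totalDegree_finset_sum _ _).trans (Finset.sup_le fun u hu => ?_)
  have h1 : shift z (monomial u (coeff u q)) =
      MvPolynomial.C (coeff u q) *
        u.prod fun i e => (MvPolynomial.X i + MvPolynomial.C (z i)) ^ e := by
    rw [monomial_eq, map_mul, shift_C, map_finsuppProd]
    simp_rw [map_pow, shift_X]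
  rw [h1]
  refine (totalDegree_mul _ _).trans ?_
  rw [totalDegree_C, zero_add]
  refine le_trans ?_ (le_totalDegree hu)
  rw [Finsupp.prod, Finsupp.sum]
  refine (totalDegree_finset_prod _ _).trans ?_
  refine Finset.sum_le_sum fun i hi => ?_
  refine (totalDegree_pow _ _).trans ?_
  have hb : (MvPolynomial.X i + MvPolynomial.C (z i) : MvPolynomial (Fin n) ℝ).totalDegree ≤ 1 :=
    (totalDegree_add _ _).trans (by simp [totalDegree_X, totalDegree_C])
  calc u i * (MvPolynomial.X i + MvPolynomial.C (z i) :
        MvPolynomial (Fin n) ℝ).totalDegree ≤ u i * 1 := Nat.mul_le_mul_left _ hb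
    _ = u i := mul_one _

lemma totalDegree_shift (z : Fin n → ℝ) (q : MvPolynomial (Fin n) ℝ) :
    (shift z q).totalDegree = q.totalDegree := by
  refine le_antisymm (totalDegree_shift_le z q) ?_
  conv_lhs => rw [← shift_left_inv z q]
  exact totalDegree_shift_le _ _

lemma substX1_C (c r : ℝ) : substX1 n c (MvPolynomial.C r) = MvPolynomial.C r := by
  rw [substX1, aeval_C, algebraMap_eq]

lemma substX1_X_succ (c : ℝ) (j : Fin n) :
    substX1 n c (MvPolynomial.X j.succ) = MvPolynomial.X j := by
  rw [substX1, aeval_X, Fin.cases_succ]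

lemma substX1_shift (z : Fin (n + 1) → ℝ) (q : MvPolynomial (Fin (n + 1)) ℝ) :
    substX1 n 0 (shift z q) = shift (z ∘ Fin.succ) (substX1 n (z 0) q) := by
  have h : (substX1 n 0).comp (shift z) = (shift (z ∘ Fin.succ)).comp (substX1 n (z 0)) := by
    apply algHom_ext
    intro i
    refine Fin.cases ?_ (fun j => ?_) i
    · rw [AlgHom.comp_apply, AlgHom.comp_apply, shift_X, map_add, substX1_X0, substX1_C,
        substX1_X0, shift_C, MvPolynomial.C_0, zero_add]
    · rw [AlgHom.comp_apply, AlgHom.comp_apply, shift_X, map_add, substX1_X_succ, substX1_C,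
        substX1_X_succ, shift_X]
      rfl
  exact DFunLike.congr_fun h q

lemma mem_QT_iff (d : ℕ) (κ : ℝ) (z : Fin (d + 1) → ℝ) (p : ℕ)
    (v : MvPolynomial (Fin (d + 1)) ℝ) :
    v ∈ QTset d κ z p ↔ (shift z v).totalDegree ≤ p ∧
      ∀ γ : Fin (d + 1) →₀ ℕ, (∑ i, γ i) + 2 ≤ p →
        coeff γ (heatOp d κ (shift z v)) = 0 := by
  have hEV : ∀ α : Fin (d + 1) → ℕ,
      MvPolynomial.eval z (mpderiv α (heatOp d κ v)) =
        (∏ i, ((α i).factorial : ℝ)) *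
          coeff (equivFunOnFinite.symm α) (heatOp d κ (shift z v)) := by
    intro α
    rw [← eval_zero_shift z, ← mpderiv_shift, heatOp_shift, eval_zero_mpderiv]
  have hfac : ∀ α : Fin (d + 1) → ℕ, (∏ i, ((α i).factorial : ℝ)) ≠ 0 := by
    intro α
    positivity
  rw [QTset, Set.mem_setOf_eq, totalDegree_shift]
  apply and_congr Iff.rfl
  constructor
  · intro h γ hγ
    have h2 := h (⇑γ) hγ
    rw [hEV] at h2
    rcases mul_eq_zero.mp h2 with h3 | h3
    · exact absurd h3 (hfac _)
    · rwa [equivFunOnFinite_symm_coe] at h3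
  · intro h α hα
    rw [hEV, h (equivFunOnFinite.symm α) hα, mul_zero]

lemma mem_QT_shift (d : ℕ) (κ : ℝ) (z : Fin (d + 1) → ℝ) (p : ℕ)
    (v : MvPolynomial (Fin (d + 1)) ℝ) :
    v ∈ QTset d κ z p ↔ shift z v ∈ QTset d κ 0 p := by
  rw [mem_QT_iff d κ z p v, mem_QT_iff d κ 0 p (shift z v), shift_zero]

lemma sum_eq_weight {m : ℕ} (δ : Fin m →₀ ℕ) : (δ.sum fun _ e => e) = ∑ i, δ i :=
  Finsupp.sum_fintype _ _ (fun _ => rfl)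

/-- The slice recursion defining the quasi-Trefftz polynomial. -/
noncomputable def sseq (e : ℕ) (κ : ℝ) (p : ℕ) (g0 g1 : MvPolynomial (Fin (e + 1)) ℝ) :
    ℕ → MvPolynomial (Fin (e + 1)) ℝ
  | 0 => g0
  | 1 => g1
  | (k + 2) =>
    if k + 2 ≤ p then
      trunc (p - (k + 2))
        ((κ * ((k : ℝ) + 1) * ((k : ℝ) + 2))⁻¹ • heatOp e κ (sseq e κ p g0 g1 k))
    else 0

section core

variable (e : ℕ) (κ : ℝ) (p : ℕ) (g0 g1 : MvPolynomial (Fin (e + 1)) ℝ)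

lemma sseq_zero : sseq e κ p g0 g1 0 = g0 := rfl

lemma sseq_one : sseq e κ p g0 g1 1 = g1 := rfl

lemma sseq_deg (hp : 1 ≤ p) (h0 : g0.totalDegree ≤ p) (h1 : g1.totalDegree ≤ p - 1) :
    ∀ k (δ : Fin (e + 1) →₀ ℕ), coeff δ (sseq e κ p g0 g1 k) ≠ 0 → k + (∑ i, δ i) ≤ p := by
  intro k δ hc
  match k with
  | 0 =>
    have := le_totalDegree (MvPolynomial.mem_support_iff.mpr hc)
    rw [sum_eq_weight, sseq_zero] at this
    omega
  | 1 =>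
    have := le_totalDegree (MvPolynomial.mem_support_iff.mpr hc)
    rw [sum_eq_weight, sseq_one] at this
    omega
  | (k + 2) =>
    rw [sseq] at hc
    by_cases hk : k + 2 ≤ p
    · rw [if_pos hk, coeff_trunc] at hc
      by_cases hd : (∑ i, δ i) ≤ p - (k + 2)
      · omega
      · rw [if_neg hd] at hc; exact absurd rfl hc
    · rw [if_neg hk] at hc
      exact absurd rfl hc

lemma sseq_vanish (hp : 1 ≤ p) : ∀ k, p < k → sseq e κ p g0 g1 k = 0 := by
  intro k hk
  match k with
  | 0 => omega
  | 1 => omega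
  | (k + 2) => rw [sseq, if_neg (by omega)]

lemma sseq_rec (hκ : κ ≠ 0) :
    ∀ k (δ : Fin (e + 1) →₀ ℕ), k + (∑ i, δ i) + 2 ≤ p →
      coeff δ (heatOp e κ (sseq e κ p g0 g1 k)) =
        κ * ((k : ℝ) + 1) * ((k : ℝ) + 2) * coeff δ (sseq e κ p g0 g1 (k + 2)) := by
  intro k δ h
  rw [sseq, if_pos (by omega), coeff_trunc, if_pos (by omega), MvPolynomial.coeff_smul,
    smul_eq_mul]
  have hne : κ * ((k : ℝ) + 1) * ((k : ℝ) + 2) ≠ 0 := by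
    have h1 : ((k : ℝ) + 1) ≠ 0 := by positivity
    have h2 : ((k : ℝ) + 2) ≠ 0 := by positivity
    exact mul_ne_zero (mul_ne_zero hκ h1) h2
  field_simp

lemma sseq_high : ∀ k (δ : Fin (e + 1) →₀ ℕ), ¬ (k + 2 + (∑ i, δ i) ≤ p) →
    coeff δ (sseq e κ p g0 g1 (k + 2)) = 0 := by
  intro k δ h
  rw [sseq]
  by_cases hk : k + 2 ≤ p
  · rw [if_pos hk, coeff_trunc, if_neg (by omega)]
  · rw [if_neg hk, coeff_zero]

end core

lemma main0 (e : ℕ) (κ : ℝ) (hκ : 0 < κ) (p : ℕ) (hp : 1 ≤ p)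
    (g0 g1 : MvPolynomial (Fin (e + 1)) ℝ)
    (h0 : g0.totalDegree ≤ p) (h1 : g1.totalDegree ≤ p - 1) :
    ∃! w : MvPolynomial (Fin (e + 1 + 1)) ℝ,
      (w.totalDegree ≤ p ∧
        ∀ γ : Fin (e + 1 + 1) →₀ ℕ, (∑ i, γ i) + 2 ≤ p →
          coeff γ (heatOp (e + 1) κ w) = 0) ∧
      substX1 (e + 1) 0 w = g0 ∧
      substX1 (e + 1) 0 (MvPolynomial.pderiv (0 : Fin (e + 1 + 1)) w) = g1 := by
  set S := sseq e κ p g0 g1 with hS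
  set v : MvPolynomial (Fin (e + 1 + 1)) ℝ :=
    ∑ k ∈ Finset.range (p + 1), MvPolynomial.X (0 : Fin (e + 1 + 1)) ^ k *
      rename Fin.succ (S k) with hv
  have hSL : ∀ b (δ : Fin (e + 1) →₀ ℕ), coeff (Finsupp.cons b δ) v = coeff δ (S b) := by
    intro b δ
    rw [hv, MvPolynomial.coeff_sum]
    simp_rw [coeff_xpow_emb]
    rw [Finset.sum_ite_eq (Finset.range (p + 1)) b (fun k => coeff δ (S k))]
    by_cases hb : b ∈ Finset.range (p + 1)
    · rw [if_pos hb]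
    · rw [if_neg hb, hS, sseq_vanish e κ p g0 g1 hp b (by
        simp only [Finset.mem_range] at hb; omega), coeff_zero]
  -- the candidate satisfies everything
  have hsum : ∀ γ : Fin (e + 1 + 1) →₀ ℕ, (∑ i, γ i) = γ 0 + ∑ i, (Finsupp.tail γ) i := by
    intro γ
    conv_lhs => rw [← Finsupp.cons_tail γ]
    rw [sum_cons]
  have hvdeg : v.totalDegree ≤ p := by
    rw [totalDegree]
    apply Finset.sup_le
    intro γ hγ
    rw [sum_eq_weight]
    have hc : coeff γ v ≠ 0 := MvPolynomial.mem_support_iff.mp hγ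
    rw [← Finsupp.cons_tail γ, hSL] at hc
    have := sseq_deg e κ p g0 g1 hp h0 h1 (γ 0) (Finsupp.tail γ) hc
    rw [hsum γ]
    omega
  have hvcond : ∀ γ : Fin (e + 1 + 1) →₀ ℕ, (∑ i, γ i) + 2 ≤ p →
      coeff γ (heatOp (e + 1) κ v) = 0 := by
    intro γ hγ
    rw [← Finsupp.cons_tail γ,
      coeff_heatOp_cons e κ v (γ 0) (Finsupp.tail γ) (S (γ 0)) (fun δ' => hSL _ δ'), hSL,
      sseq_rec e κ p g0 g1 (ne_of_gt hκ) (γ 0) (Finsupp.tail γ) (by rw [hsum γ] at hγ; omega)]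
    ring
  have hvt0 : substX1 (e + 1) 0 v = g0 := by
    apply MvPolynomial.ext
    intro δ
    rw [coeff_substX1_zero, hSL, hS, sseq_zero]
  have hvt1 : substX1 (e + 1) 0 (MvPolynomial.pderiv (0 : Fin (e + 1 + 1)) v) = g1 := by
    apply MvPolynomial.ext
    intro δ
    rw [coeff_substX1_zero, coeff_pderiv, cons_add_single_zero, Finsupp.cons_zero, hSL, hS,
      sseq_one]
    norm_num
  -- uniqueness helper
  have hU : ∀ w : MvPolynomial (Fin (e + 1 + 1)) ℝ,
      (w.totalDegree ≤ p ∧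
        ∀ γ : Fin (e + 1 + 1) →₀ ℕ, (∑ i, γ i) + 2 ≤ p →
          coeff γ (heatOp (e + 1) κ w) = 0) →
      substX1 (e + 1) 0 w = g0 →
      substX1 (e + 1) 0 (MvPolynomial.pderiv (0 : Fin (e + 1 + 1)) w) = g1 →
      ∀ b (δ : Fin (e + 1) →₀ ℕ), coeff (Finsupp.cons b δ) w = coeff δ (S b) := by
    rintro w ⟨hdeg, hcond⟩ ht0 ht1 b
    induction b using Nat.strong_induction_on with
    | _ b ih =>
      match b, ih with
      | 0, _ =>
        intro δ
        rw [← coeff_substX1_zero, ht0, hS, sseq_zero]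
      | 1, _ =>
        intro δ
        have hone : coeff (Finsupp.cons 1 δ) w =
            coeff δ (substX1 (e + 1) 0 (MvPolynomial.pderiv (0 : Fin (e + 1 + 1)) w)) := by
          rw [coeff_substX1_zero, coeff_pderiv, cons_add_single_zero, Finsupp.cons_zero]
          norm_num
        rw [hone, ht1, hS, sseq_one]
      | (b + 2), ih =>
        intro δ
        by_cases hb : (b + 2) + (∑ i, δ i) ≤ p
        · have hcnd := hcond (Finsupp.cons b δ) (by rw [sum_cons]; omega)
          rw [coeff_heatOp_cons e κ w b δ (S b) (fun δ' => ih b (by omega) δ')] at hcnd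
          have hrec := sseq_rec e κ p g0 g1 (ne_of_gt hκ) b δ (by omega)
          have hne : κ * ((b : ℝ) + 1) * ((b : ℝ) + 2) ≠ 0 := by
            have h1 : ((b : ℝ) + 1) ≠ 0 := by positivity
            have h2 : ((b : ℝ) + 2) ≠ 0 := by positivity
            exact mul_ne_zero (mul_ne_zero (ne_of_gt hκ) h1) h2
          apply mul_left_cancel₀ hne
          rw [← hS] at hrec
          linarith [hcnd, hrec]
        · have hw0 : coeff (Finsupp.cons (b + 2) δ) w = 0 := by
            by_contra hc
            have hle := le_totalDegree (MvPolynomial.mem_support_iff.mpr hc)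
            rw [sum_eq_weight, sum_cons] at hle
            omega
          rw [hw0, hS]
          exact (sseq_high e κ p g0 g1 b δ (by omega)).symm
  refine ⟨v, ⟨⟨hvdeg, hvcond⟩, hvt0, hvt1⟩, ?_⟩
  rintro w ⟨⟨hdeg, hcond⟩, ht0, ht1⟩
  apply MvPolynomial.ext
  intro γ
  rw [← Finsupp.cons_tail γ, hU w ⟨hdeg, hcond⟩ ht0 ht1, hSL]

end

end QTAux

/-- Quasi-Trefftz basis construction (Appendix A of the paper): for every
`d ≥ 1`, `κ > 0`, `z ∈ ℝ^{d+1}` and integer `p ≥ 1`, and for every pair of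
polynomials `g_0, g_1` in the `d` variables `x_2, …, x_d, t` of total degrees
at most `p` and `p − 1` respectively, there is a unique `v ∈ QT^p(z)` such
that substituting `x_1 := z_1` in `v` yields `g_0` and substituting
`x_1 := z_1` in `∂v/∂x_1` yields `g_1`; i.e. the map
`v ↦ (v|_{x_1 = z_1}, (∂v/∂x_1)|_{x_1 = z_1})` restricted to `QT^p(z)` is a
bijection onto the product of these two polynomial spaces. -/
theorem stmt12 (d : ℕ) (hd : 1 ≤ d) (κ : ℝ) (hκ : 0 < κ)
    (z : Fin (d + 1) → ℝ) (p : ℕ) (hp : 1 ≤ p) :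
    ∀ g₀ g₁ : MvPolynomial (Fin d) ℝ,
      g₀.totalDegree ≤ p → g₁.totalDegree ≤ p - 1 →
      ∃! v : MvPolynomial (Fin (d + 1)) ℝ,
        v ∈ QTset d κ z p ∧
        substX1 d (z 0) v = g₀ ∧
        substX1 d (z 0) (MvPolynomial.pderiv (0 : Fin (d + 1)) v) = g₁ := by
  obtain ⟨e, rfl⟩ : ∃ e, d = e + 1 := ⟨d - 1, by omega⟩
  intro g₀ g₁ h0 h1
  have h0' : (QTAux.shift (z ∘ Fin.succ) g₀).totalDegree ≤ p := by
    rw [QTAux.totalDegree_shift]; exact h0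
  have h1' : (QTAux.shift (z ∘ Fin.succ) g₁).totalDegree ≤ p - 1 := by
    rw [QTAux.totalDegree_shift]; exact h1
  obtain ⟨w, hw, huniq⟩ := QTAux.main0 e κ hκ p hp
    (QTAux.shift (z ∘ Fin.succ) g₀) (QTAux.shift (z ∘ Fin.succ) g₁) h0' h1'
  have hbridge : ∀ v : MvPolynomial (Fin (e + 1 + 1)) ℝ,
      (v ∈ QTset (e + 1) κ z p ∧ substX1 (e + 1) (z 0) v = g₀ ∧
        substX1 (e + 1) (z 0) (MvPolynomial.pderiv (0 : Fin (e + 1 + 1)) v) = g₁) ↔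
      (((QTAux.shift z v).totalDegree ≤ p ∧
          ∀ γ : Fin (e + 1 + 1) →₀ ℕ, (∑ i, γ i) + 2 ≤ p →
            MvPolynomial.coeff γ (heatOp (e + 1) κ (QTAux.shift z v)) = 0) ∧
        substX1 (e + 1) 0 (QTAux.shift z v) = QTAux.shift (z ∘ Fin.succ) g₀ ∧
        substX1 (e + 1) 0 (MvPolynomial.pderiv (0 : Fin (e + 1 + 1)) (QTAux.shift z v)) =
          QTAux.shift (z ∘ Fin.succ) g₁) := by
    intro v
    have e0 : (substX1 (e + 1) (z 0) v = g₀) ↔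
        (substX1 (e + 1) 0 (QTAux.shift z v) = QTAux.shift (z ∘ Fin.succ) g₀) := by
      rw [QTAux.substX1_shift]
      exact ⟨fun h => by rw [h], fun h => QTAux.shift_injective _ h⟩
    have e1 : (substX1 (e + 1) (z 0) (MvPolynomial.pderiv (0 : Fin (e + 1 + 1)) v) = g₁) ↔
        (substX1 (e + 1) 0 (MvPolynomial.pderiv (0 : Fin (e + 1 + 1)) (QTAux.shift z v)) =
          QTAux.shift (z ∘ Fin.succ) g₁) := by
      rw [QTAux.shift_pderiv, QTAux.substX1_shift]
      exact ⟨fun h => by rw [h], fun h => QTAux.shift_injective _ h⟩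
    rw [QTAux.mem_QT_iff, e0, e1]
  refine ⟨QTAux.shift (-z) w, ?_, ?_⟩
  · apply (hbridge (QTAux.shift (-z) w)).mpr
    rw [QTAux.shift_right_inv]
    exact hw
  · intro v hv
    have hvw := huniq (QTAux.shift z v) ((hbridge v).mp hv)
    rw [← hvw, QTAux.shift_left_inv]
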